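/- Fix integers K ≥ 1 and k with 0 ≤ k ≤ K−1 and reals η_n > 0, q > 0. Let s : {0,…,K} → ℝ and i_n : {0,…,K−1} → ℝ satisfy s(t+1) = s(t) + η_n·i_n(t), i_n(t) ≥ 0, and s(t+1) ≤ 1 for all t ∈ {0,…,K−1}. Let μ_e ≥ 0, i_total > 0, μ_i ≥ 0, μ̄_s ≥ 0 be reals, let I ∈ {0,1}, and suppose the stationarity identity 2·μ_e·i_total = η_n·(2q·∑_{t=k+1}^{K} (1 − s(t)) + I·μ̄_s) + μ_i − 0·i_n(k) − 0 holds (the charge-rate penalty weight is r = 0 and the multiplier of the active upper charging limit is μ̄_i = 0). If s(k+1) < 1, then μ_e > 0. -/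

import Mathlib

/-- The `r = 0` case of the core step of Theorem 1: with zero charge-rate penalty
and the EV throttled (so the upper-bound multiplier vanishes), if the state of
charge at time `k+1` is strictly below `1`, then the multiplier `μe` of the
relaxed quadratic constraint is strictly positive. -/
theorem socp_tightness_core_r_zero
    (K k : ℕ) (hK : 1 ≤ K) (hk : k ≤ K - 1)
    (ηn q : ℝ) (hηn : 0 < ηn) (hq : 0 < q)
    (s iN : ℕ → ℝ)
    (hdyn : ∀ t, t ≤ K - 1 → s (t + 1) = s t + ηn * iN t)
    (hiN : ∀ t, t ≤ K - 1 → 0 ≤ iN t)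
    (hs1 : ∀ t, t ≤ K - 1 → s (t + 1) ≤ 1)
    (μe i_total μ_i μbar_s I : ℝ)
    (hμe : 0 ≤ μe) (hitot : 0 < i_total) (hμ_i : 0 ≤ μ_i) (hμbar_s : 0 ≤ μbar_s)
    (hI : I = 0 ∨ I = 1)
    (hstat : 2 * μe * i_total =
      ηn * (2 * q * (∑ t ∈ Finset.Icc (k + 1) K, (1 - s t)) + I * μbar_s)
        + μ_i - 0 * iN k - 0)
    (hsoc : s (k + 1) < 1) :
    0 < μe := by
  have hkK : k + 1 ≤ K := by omega
  have hsum : 0 < ∑ t ∈ Finset.Icc (k + 1) K, (1 - s t) := by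
    apply Finset.sum_pos'
    · intro t ht
      simp only [Finset.mem_Icc] at ht
      obtain ⟨t', rfl⟩ : ∃ t', t = t' + 1 := ⟨t - 1, by omega⟩
      have := hs1 t' (by omega)
      linarith
    · exact ⟨k + 1, Finset.mem_Icc.mpr ⟨le_refl _, hkK⟩, by linarith⟩
  have hIμ : 0 ≤ I * μbar_s := by
    rcases hI with h | h <;> simp [h, hμbar_s]
  have hpos : 0 < 2 * μe * i_total := by
    rw [hstat]
    have : 0 < ηn * (2 * q * (∑ t ∈ Finset.Icc (k + 1) K, (1 - s t)) + I * μbar_s) := by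
      apply mul_pos hηn
      nlinarith
    linarith
  nlinarith
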